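/- For all real Y₂, Z, setting Z̃ = −Z and Ỹ₂ = Y₂ + log(1+e^{2Z}), the identity X_{Y₂} · L · X_Z · F · X_Z · R · X_{Y₂} = X_{Ỹ₂} · R · X_{Z̃} · F · X_{Z̃} · L · X_{Ỹ₂} holds. -/

import Mathlib

open Matrix Real

noncomputable def Xm (Z : ℝ) : Matrix (Fin 2) (Fin 2) ℝ :=
  !![0, -Real.exp (Z / 2); Real.exp (-Z / 2), 0]

def Fm : Matrix (Fin 2) (Fin 2) ℝ := !![0, 1; -1, 0]
def Rm : Matrix (Fin 2) (Fin 2) ℝ := !![1, 1; -1, 0]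
def Lm : Matrix (Fin 2) (Fin 2) ℝ := !![0, 1; -1, -1]

theorem pending_flip_identity_4 (Y₂ Z : ℝ) :
    Xm Y₂ * Lm * Xm Z * Fm * Xm Z * Rm * Xm Y₂ =
      Xm (Y₂ + Real.log (1 + Real.exp (2 * Z))) * Rm * Xm (-Z) * Fm * Xm (-Z) * Lm *
        Xm (Y₂ + Real.log (1 + Real.exp (2 * Z))) := by
  have hpos : (0:ℝ) < 1 + Real.exp (2 * Z) := by positivity
  have hc : Real.exp (Real.log (1 + Real.exp (2 * Z)) / 2) *
      Real.exp (Real.log (1 + Real.exp (2 * Z)) / 2) =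
      1 + Real.exp (Z / 2) ^ 4 := by
    rw [← Real.exp_add, show Real.log (1 + Real.exp (2 * Z)) / 2 +
      Real.log (1 + Real.exp (2 * Z)) / 2 = Real.log (1 + Real.exp (2 * Z)) by ring,
      Real.exp_log hpos]
    congr 1
    rw [show (2 : ℝ) * Z = Z / 2 + Z / 2 + Z / 2 + Z / 2 by ring, Real.exp_add, Real.exp_add,
      Real.exp_add]
    ring
  have hp : 0 < Real.exp (Y₂ / 2) := Real.exp_pos _
  have hq : 0 < Real.exp (Z / 2) := Real.exp_pos _
  have hcp : 0 < Real.exp (Real.log (1 + Real.exp (2 * Z)) / 2) := Real.exp_pos _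
  ext i j
  fin_cases i <;> fin_cases j <;>
    simp [Xm, Fm, Rm, Lm, Matrix.mul_apply, Fin.sum_univ_two] <;>
    simp only [add_div, neg_div, neg_add_rev, Real.exp_add, Real.exp_neg] <;>
    generalize Real.exp (Y₂ / 2) = p at * <;>
    generalize Real.exp (Z / 2) = q at * <;>
    generalize Real.exp (Real.log (1 + Real.exp (2 * Z)) / 2) = c at * <;>
    field_simp
  · linear_combination (-1 : ℝ) * hc
  · linear_combination hc
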